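/- Let n ≥ 1 and let P be a subgroup of ℤⁿ. Suppose there exists a linear functional A : ℝⁿ → ℝ with A(eᵢ) > 0 for every standard basis vector eᵢ and with A(p) = 0 for every p ∈ P. Then for every v₀ ∈ ℤⁿ, the set {v ∈ ℤⁿ : v − v₀ ∈ P and vᵢ ≥ 0 for all i} is finite. -/
import Mathlib


/-- let `P ≤ ℤⁿ` be a subgroup admitting a linear functional `A : ℝⁿ → ℝ`
which is positive on every standard basis vector and vanishes on (the real points of) `P`.
Then each coset `v₀ + P` contains only finitely many coordinatewise-nonnegative vectors. -/
theorem statement15 (n : ℕ) (hn : 1 ≤ n) (P : AddSubgroup (Fin n → ℤ))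
    (A : (Fin n → ℝ) →ₗ[ℝ] ℝ)
    (hpos : ∀ i : Fin n, 0 < A (Pi.single i 1))
    (hzero : ∀ p ∈ P, A (fun i => (p i : ℝ)) = 0)
    (v₀ : Fin n → ℤ) :
    {v : Fin n → ℤ | v - v₀ ∈ P ∧ ∀ i, 0 ≤ v i}.Finite := by
  set C := A (fun j => (v₀ j : ℝ)) with hC
  apply Set.Finite.subset
    (Set.finite_Icc (0 : Fin n → ℤ) (fun i => ⌈C / A (Pi.single i 1)⌉))
  rintro v ⟨hvP, hvnn⟩
  have hdecomp : ∀ w : Fin n → ℤ,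
      A (fun j => (w j : ℝ)) = ∑ j, (w j : ℝ) * A (Pi.single j 1) := by
    intro w
    have h1 : (fun j => (w j : ℝ)) = ∑ j, (w j : ℝ) • (Pi.single j 1 : Fin n → ℝ) := by
      ext k
      simp [Finset.sum_apply, Pi.single_apply]
    rw [h1, map_sum]
    simp [smul_eq_mul]
  have hA : A (fun j => (v j : ℝ)) = C := by
    have h0 := hzero _ hvP
    have h2 : A (fun j => ((v - v₀) j : ℝ))
        = A (fun j => (v j : ℝ)) - A (fun j => (v₀ j : ℝ)) := by
      rw [← map_sub]
      congr 1
      ext j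
      simp [Pi.sub_apply]
    rw [h2] at h0
    linarith [h0]
  refine Set.mem_Icc.2 ⟨fun i => hvnn i, fun i => ?_⟩
  have hterm : (v i : ℝ) * A (Pi.single i 1) ≤ C := by
    rw [← hA, hdecomp]
    apply Finset.single_le_sum (f := fun j => (v j : ℝ) * A (Pi.single j 1))
    · intro j _
      exact mul_nonneg (by exact_mod_cast hvnn j) (hpos j).le
    · exact Finset.mem_univ i
  have hle : (v i : ℝ) ≤ C / A (Pi.single i 1) :=
    (le_div_iff₀ (hpos i)).2 hterm
  exact_mod_cast hle.trans (Int.le_ceil _)
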